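/- Let p be a prime, e ≥ 2, n ≥ 2. Suppose u and v are primitive vectors in (Z/p^e)^n representing distinct points of P_{n,p^e} that reduce to the same point of P_{n,p^{e-1}}. Then the number of points w ∈ P_{n,p^e} with ⟨u,w⟩ = 0 = ⟨v,w⟩ equals (1/φ(p^e)) · ( p^{e(n-1)-1} − p^{(e-1)(n-1)} ). -/

import Mathlib

open scoped Classical

def Primitive {m n : ℕ} (u : Fin n → ZMod m) : Prop :=
  Nat.gcd (Finset.univ.gcd fun i => (u i).val) m = 1

def assoc {m n : ℕ} (u v : Fin n → ZMod m) : Prop :=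
  ∃ lam : (ZMod m)ˣ, v = fun i => (lam : ZMod m) * u i

def projSetoid (m n : ℕ) : Setoid {u : Fin n → ZMod m // Primitive u} where
  r u v := assoc u.1 v.1
  iseqv := by
    refine ⟨fun u => ⟨1, by simp⟩, ?_, ?_⟩
    · rintro u v ⟨l, h⟩
      refine ⟨l⁻¹, ?_⟩
      funext i
      simp [h, ← mul_assoc]
    · rintro u v w ⟨l, hl⟩ ⟨k, hk⟩
      refine ⟨k * l, ?_⟩
      funext i
      simp [hk, hl, mul_assoc]

abbrev ProjPt (m n : ℕ) := Quotient (projSetoid m n)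

noncomputable def theta (n m : ℕ) : ℕ := Nat.card (ProjPt m n)

def orthoPt (m n : ℕ) (U W : ProjPt m n) : Prop :=
  ∀ (u w : {x : Fin n → ZMod m // Primitive x}),
    Quotient.mk (projSetoid m n) u = U → Quotient.mk (projSetoid m n) w = W →
      ∑ i, u.1 i * w.1 i = 0

noncomputable def Bmat (m n : ℕ) : Matrix (ProjPt m n) (ProjPt m n) ℚ :=
  fun U V => (Nat.card {W : ProjPt m n // orthoPt m n U W ∧ orthoPt m n V W} : ℚ)

noncomputable def nuVal (p e : ℕ) (x : ZMod (p^e)) : ℕ := if x = 0 then e else padicValNat p x.val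

noncomputable def nuXi (p e : ℕ) {n : ℕ} (u v : Fin n → ZMod (p^e)) : ℕ :=
  sInf {k | ∃ i j : Fin n, k = nuVal p e (u i * v j - u j * v i)}

noncomputable def red (p e : ℕ) {n : ℕ} (u : Fin n → ZMod (p^e)) : Fin n → ZMod (p^(e-1)) :=
  fun i => ZMod.castHom (pow_dvd_pow p (Nat.sub_le e 1)) (ZMod (p^(e-1))) (u i)

noncomputable def eigMult {ι : Type*} [Fintype ι] (B : Matrix ι ι ℚ) (lam : ℚ) : ℕ :=
  Module.finrank ℚ (LinearMap.ker (B.mulVecLin - lam • (LinearMap.id : (ι → ℚ) →ₗ[ℚ] (ι → ℚ))))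

/-! ### Auxiliary lemmas -/

section Aux

variable {p e n : ℕ}

lemma pow_pred_mul_eq_zero_iff (hp : p.Prime) (he : e ≠ 0) (x : ZMod (p^e)) :
    (p : ZMod (p^e))^(e-1) * x = 0 ↔ p ∣ x.val := by
  haveI : NeZero (p^e) := ⟨pow_ne_zero e hp.pos.ne'⟩
  conv_lhs => rw [← ZMod.natCast_zmod_val x, ← Nat.cast_pow, ← Nat.cast_mul,
    ZMod.natCast_eq_zero_iff]
  generalize x.val = k
  have h : p ^ e = p ^ (e - 1) * p := by rw [← pow_succ]; congr 1; omega
  rw [h, mul_dvd_mul_iff_left (pow_ne_zero (e-1) hp.pos.ne')]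

lemma p_mul_eq_zero_iff (hp : p.Prime) (he : e ≠ 0) (x : ZMod (p^e)) :
    (p : ZMod (p^e)) * x = 0 ↔ p^(e-1) ∣ x.val := by
  haveI : NeZero (p^e) := ⟨pow_ne_zero e hp.pos.ne'⟩
  conv_lhs => rw [← ZMod.natCast_zmod_val x, ← Nat.cast_mul,
    ZMod.natCast_eq_zero_iff]
  generalize x.val = k
  have h : p ^ e = p * p ^ (e - 1) := by rw [← pow_succ']; congr 1; omega
  rw [h, mul_dvd_mul_iff_left hp.pos.ne']

lemma isUnit_iff_not_dvd_val (hp : p.Prime) (he : e ≠ 0) (x : ZMod (p^e)) :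
    IsUnit x ↔ ¬ p ∣ x.val := by
  haveI : NeZero (p^e) := ⟨pow_ne_zero e hp.pos.ne'⟩
  conv_lhs => rw [← ZMod.natCast_zmod_val x]
  rw [ZMod.isUnit_iff_coprime, Nat.coprime_pow_right_iff (by omega), Nat.coprime_comm]
  exact hp.coprime_iff_not_dvd

lemma prim_iff (hp : p.Prime) (he : e ≠ 0) (u : Fin n → ZMod (p^e)) :
    Primitive u ↔ ∃ i, ¬ p ∣ (u i).val := by
  unfold Primitive
  rw [← Nat.coprime_iff_gcd_eq_one,
    Nat.coprime_pow_right_iff (by omega), Nat.coprime_comm, hp.coprime_iff_not_dvd,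
    Finset.dvd_gcd_iff]
  push_neg
  simp

lemma prim_iff' (hp : p.Prime) (he : e ≠ 0) (u : Fin n → ZMod (p^e)) :
    Primitive u ↔ ∃ i, IsUnit (u i) := by
  rw [prim_iff hp he]
  exact exists_congr fun i => (isUnit_iff_not_dvd_val hp he _).symm

lemma pi_eq_zero_iff (hp : p.Prime) (he : e ≠ 0) (x : ZMod (p^e)) :
    ZMod.castHom (dvd_pow_self p he) (ZMod p) x = 0 ↔ p ∣ x.val := by
  haveI : NeZero (p^e) := ⟨pow_ne_zero e hp.pos.ne'⟩
  conv_lhs => rw [← ZMod.natCast_zmod_val x, map_natCast]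
  exact ZMod.natCast_eq_zero_iff _ _

lemma rho_eq_zero_iff (hp : p.Prime) (x : ZMod (p^e)) :
    ZMod.castHom (pow_dvd_pow p (Nat.sub_le e 1)) (ZMod (p^(e-1))) x = 0 ↔ p^(e-1) ∣ x.val := by
  haveI : NeZero (p^e) := ⟨pow_ne_zero e hp.pos.ne'⟩
  conv_lhs => rw [← ZMod.natCast_zmod_val x, map_natCast]
  exact ZMod.natCast_eq_zero_iff _ _

lemma exists_lift (hp : p.Prime) (he : 2 ≤ e) (u v : Fin n → ZMod (p^e))
    (hred : assoc (red p e u) (red p e v)) :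
    ∃ (lam : (ZMod (p^e))ˣ) (d : Fin n → ZMod (p^e)),
      ∀ i, v i = (lam : ZMod (p^e)) * u i + (p : ZMod (p^e))^(e-1) * d i := by
  haveI : NeZero (p^e) := ⟨pow_ne_zero e hp.pos.ne'⟩
  obtain ⟨mu, hmu⟩ := hred
  obtain ⟨lam, hlam⟩ := ZMod.unitsMap_surjective (pow_dvd_pow p (Nat.sub_le e 1)) mu
  set ρ := ZMod.castHom (pow_dvd_pow p (Nat.sub_le e 1)) (ZMod (p^(e-1)))
  have hcoe : (mu : ZMod (p^(e-1))) = ρ (lam : ZMod (p^e)) := by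
    rw [← hlam]; rfl
  have hdvd : ∀ i, p^(e-1) ∣ (v i - (lam : ZMod (p^e)) * u i).val := by
    intro i
    rw [← rho_eq_zero_iff hp]
    have : ρ (v i) = (mu : ZMod (p^(e-1))) * ρ (u i) := by
      have := congrFun hmu i
      simpa [red, ρ] using this
    rw [map_sub, map_mul, this, hcoe]
    ring
  refine ⟨lam, fun i => (((v i - (lam : ZMod (p^e)) * u i).val / p^(e-1) : ℕ) : ZMod (p^e)), ?_⟩
  intro i
  have h1 : ((p:ZMod (p^e))^(e-1)) *
        (((v i - (lam : ZMod (p^e)) * u i).val / p^(e-1) : ℕ) : ZMod (p^e))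
      = ((v i - (lam : ZMod (p^e)) * u i).val : ZMod (p^e)) := by
    rw [← Nat.cast_pow, ← Nat.cast_mul, Nat.mul_div_cancel' (hdvd i)]
  rw [h1, ZMod.natCast_zmod_val]
  ring

lemma key_nonprop (hp : p.Prime) (he : 2 ≤ e) (u v : Fin n → ZMod (p^e))
    (lam : (ZMod (p^e))ˣ) (d : Fin n → ZMod (p^e))
    (hd : ∀ i, v i = (lam : ZMod (p^e)) * u i + (p : ZMod (p^e))^(e-1) * d i)
    (hne : ¬ assoc u v) (c : ZMod (p^e)) :
    ∃ i, ¬ p ∣ (d i - c * u i).val := by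
  haveI : NeZero (p^e) := ⟨pow_ne_zero e hp.pos.ne'⟩
  haveI := Fact.mk hp
  have he0 : e ≠ 0 := by omega
  by_contra hcon
  push_neg at hcon
  have hz : ∀ i, (p : ZMod (p^e))^(e-1) * (d i - c * u i) = 0 := fun i =>
    (pow_pred_mul_eq_zero_iff hp he0 _).mpr (hcon i)
  have hvi : ∀ i, v i = ((lam : ZMod (p^e)) + (p : ZMod (p^e))^(e-1) * c) * u i := by
    intro i
    have h1 := hz i
    rw [mul_sub] at h1
    have : (p : ZMod (p^e))^(e-1) * d i = (p : ZMod (p^e))^(e-1) * (c * u i) := by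
      linear_combination h1
    rw [hd i, this]
    ring
  have hunit : IsUnit ((lam : ZMod (p^e)) + (p : ZMod (p^e))^(e-1) * c) := by
    rw [isUnit_iff_not_dvd_val hp he0, ← pi_eq_zero_iff hp he0]
    set π := ZMod.castHom (dvd_pow_self p he0) (ZMod p)
    rw [map_add, map_mul, map_pow]
    have hpz : π (p : ZMod (p^e)) = 0 := by
      rw [map_natCast]; exact ZMod.natCast_self p
    rw [hpz, zero_pow (by omega : e - 1 ≠ 0), zero_mul, add_zero]
    have : IsUnit (π (lam : ZMod (p^e))) := (lam.isUnit).map π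
    exact this.ne_zero
  exact hne ⟨hunit.unit, funext fun i => by rw [hvi i, IsUnit.unit_spec]⟩

noncomputable def Fmap (p : ℕ) {e n : ℕ} (he0 : e ≠ 0) (u d : Fin n → ZMod (p^e)) :
    (Fin n → ZMod (p^e)) →+ ZMod (p^e) × ZMod p :=
  AddMonoidHom.mk' (fun w => (∑ i, u i * w i,
    ZMod.castHom (dvd_pow_self p he0) (ZMod p) (∑ i, d i * w i))) (by
      intro a b
      have h1 : (∑ i, u i * (a i + b i)) = (∑ i, u i * a i) + ∑ i, u i * b i := by
        simp [mul_add, Finset.sum_add_distrib]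
      have h2 : (∑ i, d i * (a i + b i)) = (∑ i, d i * a i) + ∑ i, d i * b i := by
        simp [mul_add, Finset.sum_add_distrib]
      show (_, _) = (_, _) + (_, _)
      rw [Prod.mk_add_mk, Prod.mk.injEq]
      simp only [Pi.add_apply]
      exact ⟨h1, by rw [h2, map_add]⟩)

lemma sum_two_support {M : Type*} [NonUnitalNonAssocSemiring M] (f : Fin n → M)
    (i₀ j : Fin n) (hij : j ≠ i₀) (x y : M) :
    (∑ i, f i * (if i = i₀ then x else if i = j then y else 0)) = f i₀ * x + f j * y := by
  have key : ∀ i, f i * (if i = i₀ then x else if i = j then y else 0)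
      = (if i = i₀ then f i₀ * x else 0) + (if i = j then f j * y else 0) := by
    intro i
    by_cases h1 : i = i₀
    · subst h1; simp [Ne.symm hij]
    · by_cases h2 : i = j
      · subst h2; simp [hij]
      · simp [h1, h2]
  rw [Finset.sum_congr rfl (fun i _ => key i), Finset.sum_add_distrib]
  simp

lemma sum_one_support {M : Type*} [NonUnitalNonAssocSemiring M] (f : Fin n → M)
    (i₀ : Fin n) (x : M) :
    (∑ i, f i * (if i = i₀ then x else 0)) = f i₀ * x := by
  have key : ∀ i, f i * (if i = i₀ then x else 0)
      = (if i = i₀ then f i₀ * x else 0) := by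
    intro i
    by_cases h1 : i = i₀
    · subst h1; simp
    · simp [h1]
  rw [Finset.sum_congr rfl (fun i _ => key i)]
  simp

lemma Fmap_surjective (hp : p.Prime) (he0 : e ≠ 0) (u d : Fin n → ZMod (p^e))
    (i₀ : Fin n) (hui : IsUnit (u i₀))
    (hkey : ∀ c : ZMod (p^e), ∃ i, ¬ p ∣ (d i - c * u i).val) :
    Function.Surjective (Fmap p he0 u d) := by
  haveI : NeZero (p^e) := ⟨pow_ne_zero e hp.pos.ne'⟩
  haveI : NeZero p := ⟨hp.pos.ne'⟩
  set π := ZMod.castHom (dvd_pow_self p he0) (ZMod p) with hπ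
  obtain ⟨ε, hε⟩ := hui
  set c := d i₀ * (↑ε⁻¹ : ZMod (p^e)) with hc
  obtain ⟨j, hj⟩ := hkey c
  have hdi₀ : d i₀ - c * u i₀ = 0 := by
    rw [hc, ← hε]
    have : (↑ε : ZMod (p^e)) * ↑ε⁻¹ = 1 := ε.mul_inv
    calc d i₀ - d i₀ * ↑ε⁻¹ * ↑ε = d i₀ - d i₀ * (↑ε * ↑ε⁻¹) := by ring
    _ = 0 := by rw [this]; ring
  have hji : j ≠ i₀ := by
    rintro rfl
    rw [hdi₀] at hj
    simp at hj
  have hδ : IsUnit (d j - c * u j) := (isUnit_iff_not_dvd_val hp he0 _).mpr hj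
  obtain ⟨υ, hυ⟩ := hδ
  rintro ⟨a, b⟩
  set bh : ZMod (p^e) := (((b - π (c * a)).val : ℕ) : ZMod (p^e)) with hbh
  have hπbh : π bh = b - π (c * a) := by
    rw [hbh, map_natCast, ZMod.natCast_zmod_val]
  set wj : ZMod (p^e) := (↑υ⁻¹ : ZMod (p^e)) * bh with hwj
  set wi : ZMod (p^e) := (↑ε⁻¹ : ZMod (p^e)) * (a - u j * wj) with hwi
  refine ⟨fun i => if i = i₀ then wi else if i = j then wj else 0, ?_⟩
  have h1 : ∑ i, u i * (if i = i₀ then wi else if i = j then wj else 0) = a := by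
    rw [sum_two_support u i₀ j hji]
    rw [hwi, ← hε, ← mul_assoc, ε.mul_inv, one_mul]
    ring
  have h2 : ∑ i, d i * (if i = i₀ then wi else if i = j then wj else 0) = c * a + bh := by
    rw [sum_two_support d i₀ j hji]
    have hdio : d i₀ = c * u i₀ := by linear_combination hdi₀
    have hδwj : (d j - c * u j) * wj = bh := by
      rw [hwj, ← mul_assoc, ← hυ, υ.mul_inv, one_mul]
    calc d i₀ * wi + d j * wj = c * (u i₀ * wi) + c * (u j * wj) + (d j - c * u j) * wj := by
          rw [hdio]; ring
    _ = c * (u i₀ * wi + u j * wj) + bh := by rw [hδwj]; ring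
    _ = c * a + bh := by
        have : u i₀ * wi + u j * wj = a := by
          rw [hwi, ← hε, ← mul_assoc, ε.mul_inv, one_mul]; ring
        rw [this]
  show (_, _) = (a, b)
  rw [Prod.ext_iff]
  constructor
  · exact h1
  · show π _ = b
    rw [h2, map_add, hπbh]
    ring

lemma card_ker_eq {A B : Type*} [AddCommGroup A] [AddCommGroup B] [Finite A] (φ : A →+ B)
    (hs : Function.Surjective φ) : Nat.card A = Nat.card B * Nat.card φ.ker := by
  rw [AddSubgroup.card_eq_card_quotient_mul_card_addSubgroup φ.ker]
  congr 1
  exact (Nat.card_congr (QuotientAddGroup.quotientKerEquivOfSurjective φ hs).toEquiv)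

lemma ortho_of {m : ℕ} (u₀ w₀ : {x : Fin n → ZMod m // Primitive x})
    (h : ∑ i, u₀.1 i * w₀.1 i = 0) :
    orthoPt m n (Quotient.mk (projSetoid m n) u₀) (Quotient.mk (projSetoid m n) w₀) := by
  intro u' w' hu' hw'
  have h1 : assoc u'.1 u₀.1 := Quotient.exact hu'
  have h2 : assoc w'.1 w₀.1 := Quotient.exact hw'
  obtain ⟨mu, hmu⟩ := h1
  obtain ⟨ka, hka⟩ := h2
  have hsum : ∑ i, u₀.1 i * w₀.1 i
      = (mu : ZMod m) * (ka : ZMod m) * ∑ i, u'.1 i * w'.1 i := by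
    rw [Finset.mul_sum]
    refine Finset.sum_congr rfl fun i _ => ?_
    rw [hmu, hka]
    ring
  rw [hsum] at h
  have h3 := (Units.mul_right_eq_zero (a := ∑ i, u'.1 i * w'.1 i) (u := mu * ka))
  push_cast at h3
  exact h3.mp h

lemma step1 {m : ℕ} (hprim_unit : ∀ (lam : (ZMod m)ˣ) (w : Fin n → ZMod m),
      Primitive w → Primitive (fun i => (lam : ZMod m) * w i))
    (hunit_coord : ∀ w : Fin n → ZMod m, Primitive w → ∃ i, IsUnit (w i))
    (u v : Fin n → ZMod m) (hu : Primitive u) (hv : Primitive v) :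
    Nat.card {w : Fin n → ZMod m // Primitive w ∧ (∑ i, u i * w i = 0 ∧ ∑ i, v i * w i = 0)}
      = Nat.card {W : ProjPt m n //
          orthoPt m n (Quotient.mk (projSetoid m n) ⟨u, hu⟩) W ∧
          orthoPt m n (Quotient.mk (projSetoid m n) ⟨v, hv⟩) W} * Nat.card (ZMod m)ˣ := by
  set T := {W : ProjPt m n //
          orthoPt m n (Quotient.mk (projSetoid m n) ⟨u, hu⟩) W ∧
          orthoPt m n (Quotient.mk (projSetoid m n) ⟨v, hv⟩) W} with hT
  have key : ∀ (W : T) (lam : (ZMod m)ˣ),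
      Primitive (fun i => (lam : ZMod m) * (W.1.out).1 i) ∧
      ((∑ i, u i * ((lam : ZMod m) * (W.1.out).1 i) = 0) ∧
       (∑ i, v i * ((lam : ZMod m) * (W.1.out).1 i) = 0)) := by
    intro W lam
    refine ⟨hprim_unit lam _ (W.1.out).2, ?_, ?_⟩
    · have h0 : ∑ i, u i * (W.1.out).1 i = 0 :=
        W.2.1 ⟨u, hu⟩ W.1.out rfl (Quotient.out_eq _)
      calc ∑ i, u i * ((lam : ZMod m) * (W.1.out).1 i)
          = (lam : ZMod m) * ∑ i, u i * (W.1.out).1 i := by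
            rw [Finset.mul_sum]; exact Finset.sum_congr rfl fun i _ => by ring
      _ = 0 := by rw [h0, mul_zero]
    · have h0 : ∑ i, v i * (W.1.out).1 i = 0 :=
        W.2.2 ⟨v, hv⟩ W.1.out rfl (Quotient.out_eq _)
      calc ∑ i, v i * ((lam : ZMod m) * (W.1.out).1 i)
          = (lam : ZMod m) * ∑ i, v i * (W.1.out).1 i := by
            rw [Finset.mul_sum]; exact Finset.sum_congr rfl fun i _ => by ring
      _ = 0 := by rw [h0, mul_zero]
  set f : T × (ZMod m)ˣ →
      {w : Fin n → ZMod m // Primitive w ∧ (∑ i, u i * w i = 0 ∧ ∑ i, v i * w i = 0)} :=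
    fun Wl => ⟨fun i => (Wl.2 : ZMod m) * (Wl.1.1.out).1 i, key Wl.1 Wl.2⟩ with hf
  have hbij : Function.Bijective f := by
    constructor
    · rintro ⟨W, lam⟩ ⟨W', lam'⟩ h
      have hvec : ∀ i, (lam : ZMod m) * (W.1.out).1 i = (lam' : ZMod m) * (W'.1.out).1 i :=
        fun i => congrFun (congrArg Subtype.val h) i
      have hWW : W.1 = W'.1 := by
        rw [← Quotient.out_eq W.1, ← Quotient.out_eq W'.1]
        refine Quotient.sound ?_
        refine ⟨lam'⁻¹ * lam, funext fun i => ?_⟩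
        rw [Units.val_mul]
        calc (W'.1.out).1 i
            = ((lam'⁻¹ : (ZMod m)ˣ) : ZMod m) * ((lam' : ZMod m) * (W'.1.out).1 i) := by
              rw [← mul_assoc, lam'.inv_mul, one_mul]
        _ = ((lam'⁻¹ : (ZMod m)ˣ) : ZMod m) * ((lam : ZMod m) * (W.1.out).1 i) := by
              rw [hvec i]
        _ = ((lam'⁻¹ : (ZMod m)ˣ) : ZMod m) * (lam : ZMod m) * (W.1.out).1 i := by
              rw [mul_assoc]
      have hWW' : W = W' := Subtype.ext hWW
      subst hWW'
      obtain ⟨i₀, hi₀⟩ := hunit_coord _ (W.1.out).2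
      have : (lam : ZMod m) = (lam' : ZMod m) := hi₀.mul_left_cancel ?later
      · exact Prod.ext rfl (Units.ext this)
      case later =>
        calc (W.1.out).1 i₀ * (lam : ZMod m) = (lam : ZMod m) * (W.1.out).1 i₀ := by ring
        _ = (lam' : ZMod m) * (W.1.out).1 i₀ := hvec i₀
        _ = (W.1.out).1 i₀ * (lam' : ZMod m) := by ring
    · rintro ⟨w, hw, hw1, hw2⟩
      have hW : orthoPt m n (Quotient.mk (projSetoid m n) ⟨u, hu⟩)
            (Quotient.mk (projSetoid m n) ⟨w, hw⟩) ∧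
          orthoPt m n (Quotient.mk (projSetoid m n) ⟨v, hv⟩)
            (Quotient.mk (projSetoid m n) ⟨w, hw⟩) :=
        ⟨ortho_of _ _ hw1, ortho_of _ _ hw2⟩
      set W : T := ⟨Quotient.mk (projSetoid m n) ⟨w, hw⟩, hW⟩ with hWdef
      have hout : Quotient.mk (projSetoid m n) (W.1.out) = Quotient.mk (projSetoid m n) ⟨w, hw⟩ :=
        Quotient.out_eq _
      have hassoc : assoc (W.1.out).1 w := Quotient.exact hout
      obtain ⟨lam, hlam⟩ := hassoc
      exact ⟨⟨W, lam⟩, Subtype.ext (by simpa using hlam.symm)⟩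
  rw [Nat.card_congr (Equiv.ofBijective f hbij).symm, Nat.card_prod]

lemma sum_transport (hp : p.Prime) (he : 2 ≤ e) (u : Fin n → ZMod (p^e))
    (w' : Fin n → ZMod (p^(e-1))) :
    (∑ i, u i * ((p : ZMod (p^e)) * (((w' i).val : ℕ) : ZMod (p^e))) = 0)
      ↔ ∑ i, red p e u i * w' i = 0 := by
  haveI : NeZero (p^e) := ⟨pow_ne_zero e hp.pos.ne'⟩
  haveI : NeZero (p^(e-1)) := ⟨pow_ne_zero _ hp.pos.ne'⟩
  set ρ := ZMod.castHom (pow_dvd_pow p (Nat.sub_le e 1)) (ZMod (p^(e-1))) with hρ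
  set Y : ZMod (p^e) := ∑ i, u i * (((w' i).val : ℕ) : ZMod (p^e)) with hY
  have h1 : ∑ i, u i * ((p : ZMod (p^e)) * (((w' i).val : ℕ) : ZMod (p^e)))
      = (p : ZMod (p^e)) * Y := by
    rw [hY, Finset.mul_sum]
    exact Finset.sum_congr rfl fun i _ => by ring
  have h2 : ρ Y = ∑ i, red p e u i * w' i := by
    rw [hY, map_sum]
    refine Finset.sum_congr rfl fun i _ => ?_
    rw [map_mul, map_natCast, ZMod.natCast_zmod_val]
    rfl
  rw [h1, p_mul_eq_zero_iff hp (by omega), ← rho_eq_zero_iff hp, h2]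

lemma cardN (hp : p.Prime) (he : 2 ≤ e) (u : Fin n → ZMod (p^e)) :
    Nat.card {w : Fin n → ZMod (p^e) // (∀ i, p ∣ (w i).val) ∧ ∑ i, u i * w i = 0}
      = Nat.card {w' : Fin n → ZMod (p^(e-1)) // ∑ i, red p e u i * w' i = 0} := by
  haveI : NeZero (p^e) := ⟨pow_ne_zero e hp.pos.ne'⟩
  haveI : NeZero (p^(e-1)) := ⟨pow_ne_zero _ hp.pos.ne'⟩
  have hpe : p * p^(e-1) = p^e := by rw [← pow_succ']; congr 1; omega
  have hmem : ∀ (w' : Fin n → ZMod (p^(e-1))) (i : Fin n),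
      p ∣ ((p : ZMod (p^e)) * (((w' i).val : ℕ) : ZMod (p^e))).val := by
    intro w' i
    rw [← Nat.cast_mul, ZMod.val_natCast]
    exact (Nat.dvd_mod_iff (dvd_pow_self p (by omega : e ≠ 0))).mpr ⟨_, rfl⟩
  set Φ : {w' : Fin n → ZMod (p^(e-1)) // ∑ i, red p e u i * w' i = 0} →
      {w : Fin n → ZMod (p^e) // (∀ i, p ∣ (w i).val) ∧ ∑ i, u i * w i = 0} :=
    fun w' => ⟨fun i => (p : ZMod (p^e)) * (((w'.1 i).val : ℕ) : ZMod (p^e)),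
      hmem w'.1, (sum_transport hp he u w'.1).mpr w'.2⟩ with hΦ
  have hinj : Function.Injective Φ := by
    rintro ⟨w1, h1⟩ ⟨w2, h2⟩ h
    have hvec := congrFun (congrArg Subtype.val h)
    refine Subtype.ext (funext fun i => ?_)
    have hi := hvec i
    simp only [hΦ] at hi
    rw [← Nat.cast_mul, ← Nat.cast_mul] at hi
    have hlt1 : p * (w1 i).val < p^e := by
      have h0 : p * (w1 i).val < p * p^(e-1) :=
        mul_lt_mul_of_pos_left (ZMod.val_lt (w1 i)) hp.pos
      omega
    have hlt2 : p * (w2 i).val < p^e := by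
      have h0 : p * (w2 i).val < p * p^(e-1) :=
        mul_lt_mul_of_pos_left (ZMod.val_lt (w2 i)) hp.pos
      omega
    have hval := congrArg ZMod.val hi
    rw [ZMod.val_cast_of_lt hlt1, ZMod.val_cast_of_lt hlt2] at hval
    have hv2 : (w1 i).val = (w2 i).val := Nat.eq_of_mul_eq_mul_left hp.pos hval
    show w1 i = w2 i
    rw [← ZMod.natCast_zmod_val (w1 i), ← ZMod.natCast_zmod_val (w2 i), hv2]
  have hsurj : Function.Surjective Φ := by
    rintro ⟨w, hdvd, hsum⟩
    set w' : Fin n → ZMod (p^(e-1)) := fun i => (((w i).val / p : ℕ) : ZMod (p^(e-1))) with hw'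
    have hvec : ∀ i, (p : ZMod (p^e)) * (((w' i).val : ℕ) : ZMod (p^e)) = w i := by
      intro i
      have hlt : (w i).val / p < p^(e-1) := by
        rw [Nat.div_lt_iff_lt_mul hp.pos, mul_comm (p^(e-1)) p, hpe]
        exact ZMod.val_lt (w i)
      have hval : (w' i).val = (w i).val / p := by
        rw [hw']
        exact ZMod.val_cast_of_lt hlt
      rw [hval, ← Nat.cast_mul, Nat.mul_div_cancel' (hdvd i), ZMod.natCast_zmod_val]
    have hsum' : ∑ i, red p e u i * w' i = 0 := by
      rw [← sum_transport hp he u w']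
      calc ∑ i, u i * ((p : ZMod (p^e)) * (((w' i).val : ℕ) : ZMod (p^e)))
          = ∑ i, u i * w i := Finset.sum_congr rfl fun i _ => by rw [hvec i]
      _ = 0 := hsum
    exact ⟨⟨w', hsum'⟩, Subtype.ext (funext fun i => hvec i)⟩
  exact (Nat.card_congr (Equiv.ofBijective Φ ⟨hinj, hsurj⟩)).symm

noncomputable def Gmap (p e : ℕ) {n : ℕ} (ru : Fin n → ZMod (p^(e-1))) :
    (Fin n → ZMod (p^(e-1))) →+ ZMod (p^(e-1)) :=
  AddMonoidHom.mk' (fun w => ∑ i, ru i * w i) (by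
    intro a b
    simp [mul_add, Finset.sum_add_distrib])

lemma Gmap_surjective (ru : Fin n → ZMod (p^(e-1))) (i₀ : Fin n) (hui : IsUnit (ru i₀)) :
    Function.Surjective (Gmap p e ru) := by
  obtain ⟨ε, hε⟩ := hui
  intro a
  refine ⟨fun i => if i = i₀ then (↑ε⁻¹ : ZMod (p^(e-1))) * a else 0, ?_⟩
  show (∑ i, ru i * _) = a
  rw [sum_one_support ru i₀, ← hε, ← mul_assoc, ε.mul_inv, one_mul]

end Aux

theorem stmt10 (p e n : ℕ) (hp : p.Prime) (he : 2 ≤ e) (hn : 2 ≤ n)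
    (u v : Fin n → ZMod (p^e)) (hu : Primitive u) (hv : Primitive v)
    (hne : ¬ assoc u v) (hred : assoc (red p e u) (red p e v)) :
    Nat.totient (p^e) *
      Nat.card {W : ProjPt (p^e) n //
        orthoPt (p^e) n (Quotient.mk (projSetoid (p^e) n) ⟨u, hu⟩) W ∧
        orthoPt (p^e) n (Quotient.mk (projSetoid (p^e) n) ⟨v, hv⟩) W}
      = p^(e*(n-1)-1) - p^((e-1)*(n-1)) := by
  haveI : NeZero (p^e) := ⟨pow_ne_zero e hp.pos.ne'⟩
  haveI : NeZero (p^(e-1)) := ⟨pow_ne_zero _ hp.pos.ne'⟩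
  haveI : NeZero p := ⟨hp.pos.ne'⟩
  have he0 : e ≠ 0 := by omega
  obtain ⟨lam, d, hd⟩ := exists_lift hp he u v hred
  have hkey := key_nonprop hp he u v lam d hd hne
  obtain ⟨i₀, hui₀⟩ := (prim_iff' hp he0 u).mp hu
  set π := ZMod.castHom (dvd_pow_self p he0) (ZMod p) with hπ
  -- the v-sum decomposition
  have hvsum : ∀ w : Fin n → ZMod (p^e), ∑ i, v i * w i
      = (lam : ZMod (p^e)) * (∑ i, u i * w i) + (p : ZMod (p^e))^(e-1) * ∑ i, d i * w i := by
    intro w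
    rw [Finset.mul_sum, Finset.mul_sum, ← Finset.sum_add_distrib]
    refine Finset.sum_congr rfl fun i _ => ?_
    rw [hd i]
    ring
  -- condition equivalence with kernel of Fmap
  have hC : ∀ w : Fin n → ZMod (p^e),
      ((∑ i, u i * w i = 0 ∧ ∑ i, v i * w i = 0)) ↔ Fmap p he0 u d w = 0 := by
    intro w
    have hF : Fmap p he0 u d w = (∑ i, u i * w i, π (∑ i, d i * w i)) := rfl
    rw [hF, Prod.mk_eq_zero]
    constructor
    · rintro ⟨h1, h2⟩
      refine ⟨h1, ?_⟩
      rw [hvsum w, h1, mul_zero, zero_add] at h2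
      have := (pow_pred_mul_eq_zero_iff hp he0 _).mp h2
      exact (pi_eq_zero_iff hp he0 _).mpr this
    · rintro ⟨h1, h2⟩
      refine ⟨h1, ?_⟩
      rw [hvsum w, h1, mul_zero, zero_add]
      exact (pow_pred_mul_eq_zero_iff hp he0 _).mpr ((pi_eq_zero_iff hp he0 _).mp h2)
  -- cardinality of all solutions
  have hcard_all : Nat.card {w : Fin n → ZMod (p^e) //
      (∑ i, u i * w i = 0 ∧ ∑ i, v i * w i = 0)} = p^(e*(n-1)-1) := by
    have hFsurj := Fmap_surjective hp he0 u d i₀ hui₀ hkey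
    have heq := card_ker_eq (Fmap p he0 u d) hFsurj
    have hdom : Nat.card (Fin n → ZMod (p^e)) = p^(e*n) := by
      simp [Nat.card_pi, Nat.card_zmod, pow_mul]
    have hcod : Nat.card (ZMod (p^e) × ZMod p) = p^(e+1) := by
      simp [Nat.card_prod, Nat.card_zmod, pow_succ]
    have hexp : e*n = (e+1) + (e*(n-1) - 1) := by
      rw [Nat.mul_sub, mul_one]
      have hA : e * 2 ≤ e * n := Nat.mul_le_mul_left e hn
      omega
    have hker : Nat.card (Fmap p he0 u d).ker = p^(e*(n-1)-1) := by
      have h2 : p^(e*n) = p^(e+1) * p^(e*(n-1)-1) := by rw [← pow_add, ← hexp]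
      rw [hdom, hcod, h2] at heq
      exact (Nat.eq_of_mul_eq_mul_left (pow_pos hp.pos _) heq.symm)
    rw [← hker]
    exact Nat.card_congr (Equiv.subtypeEquivRight fun w =>
      (hC w).trans (AddMonoidHom.mem_ker).symm)
  -- cardinality of non-primitive solutions
  have hcard_nonprim : Nat.card {w : Fin n → ZMod (p^e) //
      (∑ i, u i * w i = 0 ∧ ∑ i, v i * w i = 0) ∧ ¬ Primitive w} = p^((e-1)*(n-1)) := by
    have hiff : ∀ w : Fin n → ZMod (p^e),
        ((∑ i, u i * w i = 0 ∧ ∑ i, v i * w i = 0) ∧ ¬ Primitive w)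
          ↔ ((∀ i, p ∣ (w i).val) ∧ ∑ i, u i * w i = 0) := by
      intro w
      constructor
      · rintro ⟨⟨h1, h2⟩, h3⟩
        rw [prim_iff hp he0] at h3
        push_neg at h3
        exact ⟨h3, h1⟩
      · rintro ⟨h1, h2⟩
        have h3 : ¬ Primitive w := by
          rw [prim_iff hp he0]
          push_neg
          exact h1
        refine ⟨⟨h2, ?_⟩, h3⟩
        rw [hvsum w, h2, mul_zero, zero_add]
        have : ∀ i, d i * ((p : ZMod (p^e))^(e-1) * w i) = d i * 0 := by
          intro i
          rw [(pow_pred_mul_eq_zero_iff hp he0 (w i)).mpr (h1 i)]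
        calc (p : ZMod (p^e))^(e-1) * ∑ i, d i * w i
            = ∑ i, d i * ((p : ZMod (p^e))^(e-1) * w i) := by
              rw [Finset.mul_sum]; exact Finset.sum_congr rfl fun i _ => by ring
        _ = 0 := by rw [Finset.sum_congr rfl fun i _ => this i]; simp
    rw [Nat.card_congr (Equiv.subtypeEquivRight hiff), cardN hp he u]
    -- now count kernel of Gmap
    have hru : IsUnit (red p e u i₀) :=
      hui₀.map (ZMod.castHom (pow_dvd_pow p (Nat.sub_le e 1)) (ZMod (p^(e-1))))
    have hGsurj := Gmap_surjective (red p e u) i₀ hru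
    have heq := card_ker_eq (Gmap p e (red p e u)) hGsurj
    have hdom : Nat.card (Fin n → ZMod (p^(e-1))) = p^((e-1)*n) := by
      simp [Nat.card_pi, Nat.card_zmod, pow_mul]
    have hcod : Nat.card (ZMod (p^(e-1))) = p^(e-1) := by
      simp [Nat.card_zmod]
    have hexp : (e-1)*n = (e-1) + (e-1)*(n-1) := by
      rw [Nat.mul_sub, mul_one]
      have hA : (e-1) ≤ (e-1) * n :=
        Nat.le_mul_of_pos_right (e-1) (lt_of_lt_of_le two_pos hn)
      exact (Nat.add_sub_cancel' hA).symm
    have hker : Nat.card (Gmap p e (red p e u)).ker = p^((e-1)*(n-1)) := by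
      have h2 : p^((e-1)*n) = p^(e-1) * p^((e-1)*(n-1)) := by rw [← pow_add, ← hexp]
      rw [hdom, hcod, h2] at heq
      exact (Nat.eq_of_mul_eq_mul_left (pow_pos hp.pos _) heq.symm)
    rw [← hker]
    exact Nat.card_congr (Equiv.subtypeEquivRight fun w =>
      (AddMonoidHom.mem_ker (f := Gmap p e (red p e u)) (x := w)).symm)
  -- split by primitivity
  have hsplit : Nat.card {w : Fin n → ZMod (p^e) //
        (∑ i, u i * w i = 0 ∧ ∑ i, v i * w i = 0) ∧ Primitive w}
      + Nat.card {w : Fin n → ZMod (p^e) //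
        (∑ i, u i * w i = 0 ∧ ∑ i, v i * w i = 0) ∧ ¬ Primitive w}
      = Nat.card {w : Fin n → ZMod (p^e) //
        (∑ i, u i * w i = 0 ∧ ∑ i, v i * w i = 0)} := by
    set C := fun w : Fin n → ZMod (p^e) => (∑ i, u i * w i = 0 ∧ ∑ i, v i * w i = 0) with hCdef
    have e1 : {x : {w // C w} // Primitive x.1} ≃ {w // C w ∧ Primitive w} :=
      Equiv.subtypeSubtypeEquivSubtypeInter C Primitive
    have e2 : {x : {w // C w} // ¬ Primitive x.1} ≃ {w // C w ∧ ¬ Primitive w} :=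
      Equiv.subtypeSubtypeEquivSubtypeInter C (fun w => ¬ Primitive w)
    have e3 : {x : {w // C w} // Primitive x.1} ⊕ {x : {w // C w} // ¬ Primitive x.1}
        ≃ {w // C w} := Equiv.sumCompl _
    calc Nat.card {w // C w ∧ Primitive w} + Nat.card {w // C w ∧ ¬ Primitive w}
        = Nat.card {x : {w // C w} // Primitive x.1}
          + Nat.card {x : {w // C w} // ¬ Primitive x.1} := by
          rw [Nat.card_congr e1, Nat.card_congr e2]
    _ = Nat.card ({x : {w // C w} // Primitive x.1} ⊕ {x : {w // C w} // ¬ Primitive x.1}) := by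
          rw [Nat.card_sum]
    _ = Nat.card {w // C w} := Nat.card_congr e3
  -- step 1
  have hstep1 := step1 (m := p^e) (n := n)
    (fun lam w hw => by
      rw [prim_iff' hp he0] at hw ⊢
      obtain ⟨i, hi⟩ := hw
      exact ⟨i, lam.isUnit.mul hi⟩)
    (fun w hw => (prim_iff' hp he0 w).mp hw) u v hu hv
  have hunits : Nat.card (ZMod (p^e))ˣ = Nat.totient (p^e) := by
    rw [Nat.card_eq_fintype_card, ZMod.card_units_eq_totient]
  have hflip : Nat.card {w : Fin n → ZMod (p^e) //
        Primitive w ∧ (∑ i, u i * w i = 0 ∧ ∑ i, v i * w i = 0)}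
      = Nat.card {w : Fin n → ZMod (p^e) //
        (∑ i, u i * w i = 0 ∧ ∑ i, v i * w i = 0) ∧ Primitive w} :=
    Nat.card_congr (Equiv.subtypeEquivRight fun w => and_comm)
  rw [hflip, hunits] at hstep1
  rw [hcard_all, hcard_nonprim] at hsplit
  rw [mul_comm (Nat.totient (p^e)), ← hstep1]
  exact Nat.eq_sub_of_add_eq hsplit
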